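/- The sequence (1/F_{n+2})_{n≥0} is the moment sequence of the probability measure μ = (1-q^2) Σ_{k=0}^∞ q^{2k} δ_{q^k/φ}, i.e., for all n ≥ 0, 1/F_{n+2} = (1-q^2) Σ_{k=0}^∞ q^{2k} (q^k/φ)^n; moreover μ is a positive measure with total mass 1. -/

import Mathlib

open MeasureTheory

noncomputable def goldenPhi : ℝ := (1 + Real.sqrt 5) / 2

noncomputable def fibQ : ℝ := (1 - Real.sqrt 5) / (1 + Real.sqrt 5)

/-- The measure `μ = (1 - q²) ∑_{k≥0} q^{2k} δ_{q^k/φ}`. -/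
noncomputable def fibMeasure : Measure ℝ :=
  Measure.sum fun k : ℕ =>
    ENNReal.ofReal ((1 - fibQ ^ 2) * fibQ ^ (2 * k)) • Measure.dirac (fibQ ^ k / goldenPhi)

open Real goldenRatio ENNReal NNReal

lemma sqrt5_sq : Real.sqrt 5 ^ 2 = 5 := Real.sq_sqrt (by norm_num)

lemma sqrt5_gt_one : 1 < Real.sqrt 5 := by
  nlinarith [sqrt5_sq, Real.sqrt_nonneg 5]

lemma goldenPhi_eq : goldenPhi = φ := rfl

lemma fibQ_eq : fibQ = ψ / φ := by
  have h : (1 : ℝ) + Real.sqrt 5 ≠ 0 := by nlinarith [sqrt5_gt_one]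
  unfold fibQ goldenRatio goldenConj
  field_simp

lemma abs_fibQ_lt_one : |fibQ| < 1 := by
  have h : (0:ℝ) < 1 + Real.sqrt 5 := by nlinarith [sqrt5_gt_one]
  rw [fibQ, abs_div, abs_of_pos h, div_lt_one h, abs_of_nonpos (by nlinarith [sqrt5_gt_one])]
  nlinarith [sqrt5_gt_one]

lemma fibQ_sq_lt_one : fibQ ^ 2 < 1 := by
  have := abs_fibQ_lt_one
  nlinarith [abs_nonneg fibQ, sq_abs fibQ]

lemma term_eq (n k : ℕ) : fibQ ^ (2 * k) * (fibQ ^ k / goldenPhi) ^ n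
    = (fibQ ^ (n + 2)) ^ k * (1 / goldenPhi ^ n) := by
  have h2 : 2 * k + k * n = (n + 2) * k := by ring
  rw [div_pow, ← pow_mul, ← mul_div_assoc, ← pow_add, h2, pow_mul, mul_one_div]

lemma hasSum_fib (n : ℕ) : HasSum (fun k : ℕ => fibQ ^ (2 * k) * (fibQ ^ k / goldenPhi) ^ n)
    ((1 - fibQ ^ (n + 2))⁻¹ * (1 / goldenPhi ^ n)) := by
  have hr : ‖fibQ ^ (n + 2)‖ < 1 := by
    rw [norm_pow, Real.norm_eq_abs]
    exact pow_lt_one₀ (abs_nonneg _) abs_fibQ_lt_one (by omega)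
  have := (hasSum_geometric_of_norm_lt_one hr).mul_right (1 / goldenPhi ^ n)
  simpa only [term_eq] using this

lemma one_sub_fibQ_pow (m : ℕ) :
    1 - fibQ ^ m = Real.sqrt 5 * (Nat.fib m : ℝ) / φ ^ m := by
  have hφ : φ ≠ 0 := goldenRatio_ne_zero
  have hs : Real.sqrt 5 ≠ 0 := by nlinarith [sqrt5_gt_one]
  rw [fibQ_eq, div_pow, Real.coe_fib_eq]
  field_simp

lemma moment_val (n : ℕ) :
    (1 - fibQ ^ 2) * ((1 - fibQ ^ (n + 2))⁻¹ * (1 / goldenPhi ^ n))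
      = 1 / (Nat.fib (n + 2) : ℝ) := by
  have hφ : (0:ℝ) < φ := goldenRatio_pos
  have hs : (0:ℝ) < Real.sqrt 5 := by nlinarith [sqrt5_gt_one]
  have hF : (0:ℝ) < (Nat.fib (n + 2) : ℝ) := by
    exact_mod_cast Nat.fib_pos.mpr (by omega)
  have h2 : 1 - fibQ ^ 2 = Real.sqrt 5 / φ ^ 2 := by
    have := one_sub_fibQ_pow 2
    simpa using this
  rw [goldenPhi_eq, h2, one_sub_fibQ_pow (n + 2)]
  rw [pow_add]
  field_simp

theorem fib_reciprocal_moments :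
    (∀ n : ℕ, (1 : ℝ) / (Nat.fib (n + 2) : ℝ) =
        (1 - fibQ ^ 2) * ∑' k : ℕ, fibQ ^ (2 * k) * (fibQ ^ k / goldenPhi) ^ n) ∧
      IsProbabilityMeasure fibMeasure ∧
      (∀ n : ℕ, ∫ x, x ^ n ∂fibMeasure = (1 : ℝ) / (Nat.fib (n + 2) : ℝ)) := by
  have hmom : ∀ n : ℕ, (1 : ℝ) / (Nat.fib (n + 2) : ℝ) =
      (1 - fibQ ^ 2) * ∑' k : ℕ, fibQ ^ (2 * k) * (fibQ ^ k / goldenPhi) ^ n := by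
    intro n
    rw [(hasSum_fib n).tsum_eq, moment_val n]
  have hc : ∀ k : ℕ, 0 ≤ (1 - fibQ ^ 2) * fibQ ^ (2 * k) := by
    intro k
    have h1 : (0:ℝ) ≤ fibQ ^ (2 * k) := by rw [pow_mul]; positivity
    nlinarith [fibQ_sq_lt_one]
  have hcsum : HasSum (fun k : ℕ => (1 - fibQ ^ 2) * fibQ ^ (2 * k)) 1 := by
    have hr : ‖fibQ ^ 2‖ < 1 := by
      rw [Real.norm_eq_abs, abs_of_nonneg (sq_nonneg _)]; exact fibQ_sq_lt_one
    have h := (hasSum_geometric_of_norm_lt_one hr).mul_left (1 - fibQ ^ 2)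
    have hne : 1 - fibQ ^ 2 ≠ 0 := by nlinarith [fibQ_sq_lt_one]
    simpa only [← pow_mul, mul_inv_cancel₀ hne] using h
  have hmass : ∑' k : ℕ, ENNReal.ofReal ((1 - fibQ ^ 2) * fibQ ^ (2 * k)) = 1 := by
    rw [← ENNReal.ofReal_tsum_of_nonneg hc hcsum.summable, hcsum.tsum_eq, ENNReal.ofReal_one]
  have hprob : IsProbabilityMeasure fibMeasure := by
    constructor
    rw [fibMeasure, Measure.sum_apply _ MeasurableSet.univ]
    simp only [Measure.smul_apply, measure_univ, smul_eq_mul, mul_one]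
    exact hmass
  refine ⟨hmom, hprob, fun n => ?_⟩
  have habs1 : ∀ k : ℕ, |fibQ ^ k / goldenPhi| ≤ 1 := by
    intro k
    rw [abs_div, goldenPhi_eq, abs_of_pos goldenRatio_pos, div_le_one goldenRatio_pos, abs_pow]
    calc |fibQ| ^ k ≤ 1 := pow_le_one₀ (abs_nonneg _) abs_fibQ_lt_one.le
      _ ≤ φ := one_lt_goldenRatio.le
  have hint : Integrable (fun x : ℝ => x ^ n) fibMeasure := by
    refine ⟨(continuous_pow n).aestronglyMeasurable, ?_⟩
    rw [HasFiniteIntegral, fibMeasure, lintegral_sum_measure]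
    simp only [lintegral_smul_measure, lintegral_dirac]
    calc ∑' k : ℕ, ENNReal.ofReal ((1 - fibQ ^ 2) * fibQ ^ (2 * k)) *
          (‖(fibQ ^ k / goldenPhi) ^ n‖₊ : ℝ≥0∞)
        ≤ ∑' k : ℕ, ENNReal.ofReal ((1 - fibQ ^ 2) * fibQ ^ (2 * k)) * 1 := by
          refine ENNReal.tsum_le_tsum fun k => mul_le_mul_right ?_ _
          rw [ENNReal.coe_le_one_iff, ← NNReal.coe_le_coe, coe_nnnorm, Real.norm_eq_abs,
            NNReal.coe_one, abs_pow]
          exact pow_le_one₀ (abs_nonneg _) (by simpa [abs_pow] using habs1 k)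
      _ = 1 := by simpa using hmass
      _ < ⊤ := ENNReal.one_lt_top
  rw [fibMeasure] at hint ⊢
  rw [integral_sum_measure hint]
  simp only [integral_smul_measure, integral_dirac, smul_eq_mul]
  have htr : ∀ k : ℕ, (ENNReal.ofReal ((1 - fibQ ^ 2) * fibQ ^ (2 * k))).toReal
      = (1 - fibQ ^ 2) * fibQ ^ (2 * k) := fun k => ENNReal.toReal_ofReal (hc k)
  simp only [htr]
  rw [hmom n]
  calc ∑' i : ℕ, (1 - fibQ ^ 2) * fibQ ^ (2 * i) * (fibQ ^ i / goldenPhi) ^ n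
      = ∑' i : ℕ, (1 - fibQ ^ 2) * (fibQ ^ (2 * i) * (fibQ ^ i / goldenPhi) ^ n) :=
        tsum_congr fun k => by ring
    _ = _ := tsum_mul_left
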